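/- Let B ∈ L(H,K) have closed range and suppose (A₁, N(B)) and (A₂, R(B)) are compatible pairs. Then the set GI(B,A₁,A₂) of bounded solutions C of the system BCB = B, CBC = C, A₁CB = (CB)*A₁, A₂BC = (BC)*A₂ equals {(I − Q) B† P : Q ∈ P(A₁, N(B)), P ∈ P(A₂, R(B))}, where B† is the Moore–Penrose inverse of B. -/

import Mathlib

open ContinuousLinearMap

/-- `P(A,S)`: the set of `A`-Hermitian bounded projections with range `S`. -/
def PAS {H : Type*} [NormedAddCommGroup H] [InnerProductSpace ℂ H] [CompleteSpace H]
    (A : H →L[ℂ] H) (S : Submodule ℂ H) : Set (H →L[ℂ] H) :=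
  {Q | Q ∘L Q = Q ∧ LinearMap.range (Q : H →ₗ[ℂ] H) = S ∧ A ∘L Q = adjoint Q ∘L A}

theorem stmt_7
    {H K : Type*}
    [NormedAddCommGroup H] [InnerProductSpace ℂ H] [CompleteSpace H]
    [NormedAddCommGroup K] [InnerProductSpace ℂ K] [CompleteSpace K]
    (B : H →L[ℂ] K) (hB : IsClosed (LinearMap.range (B : H →ₗ[ℂ] K) : Set K))
    (A₁ : H →L[ℂ] H) (hA₁ : A₁.IsPositive)
    (A₂ : K →L[ℂ] K) (hA₂ : A₂.IsPositive)
    (hc₁ : (PAS A₁ (LinearMap.ker (B : H →ₗ[ℂ] K))).Nonempty)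
    (hc₂ : (PAS A₂ (LinearMap.range (B : H →ₗ[ℂ] K))).Nonempty)
    -- `Bd` is the Moore–Penrose inverse of `B`, characterized by the four Penrose equations.
    (Bd : K →L[ℂ] H) (hd1 : B ∘L Bd ∘L B = B) (hd2 : Bd ∘L B ∘L Bd = Bd)
    (hd3 : IsSelfAdjoint (B ∘L Bd)) (hd4 : IsSelfAdjoint (Bd ∘L B)) :
    {C : K →L[ℂ] H |
        B ∘L C ∘L B = B ∧ C ∘L B ∘L C = C ∧
        A₁ ∘L (C ∘L B) = adjoint (C ∘L B) ∘L A₁ ∧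
        A₂ ∘L (B ∘L C) = adjoint (B ∘L C) ∘L A₂} =
      {C : K →L[ℂ] H | ∃ Q ∈ PAS A₁ (LinearMap.ker (B : H →ₗ[ℂ] K)), ∃ P ∈ PAS A₂ (LinearMap.range (B : H →ₗ[ℂ] K)),
        C = (1 - Q) ∘L Bd ∘L P} := by
  have hd1' : ∀ x, B (Bd (B x)) = B x := fun x => by
    simpa using DFunLike.congr_fun hd1 x
  ext C
  simp only [Set.mem_setOf_eq, PAS]
  constructor
  · rintro ⟨h1, h2, h3, h4⟩
    have h1' : ∀ x, B (C (B x)) = B x := fun x => by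
      simpa using DFunLike.congr_fun h1 x
    have h2' : ∀ x, C (B (C x)) = C x := fun x => by
      simpa using DFunLike.congr_fun h2 x
    refine ⟨1 - C ∘L B, ⟨?_, ?_, ?_⟩, B ∘L C, ⟨?_, ?_, ?_⟩, ?_⟩
    · ext x
      simp only [comp_apply, sub_apply, one_apply_eq_self, map_sub, h1', h2']
      abel
    · ext y
      simp only [LinearMap.mem_ker, LinearMap.mem_range]
      constructor
      · rintro ⟨x, rfl⟩
        simp [h1']
      · intro hy
        exact ⟨y, by simp [show B y = 0 from hy]⟩
    · have hadj : adjoint (1 - C ∘L B) = 1 - adjoint (C ∘L B) := by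
        rw [← star_eq_adjoint, star_sub, star_one, star_eq_adjoint]
      rw [hadj, comp_sub, sub_comp, h3]
      simp [one_def]
    · ext x
      simp only [comp_apply]
      rw [h2']
    · ext y
      simp only [LinearMap.mem_range]
      constructor
      · rintro ⟨x, rfl⟩
        exact ⟨C x, rfl⟩
      · rintro ⟨x, rfl⟩
        exact ⟨B x, by simp [h1']⟩
    · exact h4
    · ext x
      simp only [comp_apply, sub_apply, one_apply, sub_sub_cancel]
      rw [hd1', h2']
  · rintro ⟨Q, ⟨hQ2, hQr, hQA⟩, P, ⟨hP2, hPr, hPA⟩, rfl⟩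
    have hQ2' : ∀ x, Q (Q x) = Q x := fun x => by
      simpa using DFunLike.congr_fun hQ2 x
    have hP2' : ∀ x, P (P x) = P x := fun x => by
      simpa using DFunLike.congr_fun hP2 x
    -- B kills the range of Q
    have hBQ : ∀ x, B (Q x) = 0 := fun x => by
      have : Q x ∈ LinearMap.ker (B : H →ₗ[ℂ] K) := hQr ▸ LinearMap.mem_range.2 ⟨x, rfl⟩
      exact LinearMap.mem_ker.1 this
    -- Q fixes ker B
    have hQfix : ∀ x, B x = 0 → Q x = x := fun x hx => by
      have : x ∈ LinearMap.range (Q : H →ₗ[ℂ] H) := hQr ▸ LinearMap.mem_ker.2 hx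
      obtain ⟨y, rfl⟩ := LinearMap.mem_range.1 this
      exact hQ2' y
    -- P fixes range B
    have hPB : ∀ x, P (B x) = B x := fun x => by
      have : B x ∈ LinearMap.range (P : K →ₗ[ℂ] K) := hPr ▸ LinearMap.mem_range.2 ⟨x, rfl⟩
      obtain ⟨y, hy⟩ := LinearMap.mem_range.1 this
      rw [← (show P y = B x from hy), hP2']
    -- B Bd fixes range P
    have hFP : ∀ x, B (Bd (P x)) = P x := fun x => by
      have : P x ∈ LinearMap.range (B : H →ₗ[ℂ] K) := hPr ▸ LinearMap.mem_range.2 ⟨x, rfl⟩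
      obtain ⟨y, hy⟩ := LinearMap.mem_range.1 this
      rw [← (show B y = P x from hy), hd1']
    set C := (1 - Q) ∘L Bd ∘L P with hC
    -- C B = 1 - Q
    have hCB : C ∘L B = 1 - Q := by
      ext x
      have hker : B (x - Bd (B x)) = 0 := by simp [map_sub, hd1']
      have hfix := hQfix _ hker
      simp only [map_sub] at hfix
      simp only [hC, comp_apply, sub_apply, one_apply_eq_self, hPB]
      -- goal : Bd (B x) - Q (Bd (B x)) = x - Q x
      have : Q x - Q (Bd (B x)) = x - Bd (B x) := hfix
      have h2 : Q (Bd (B x)) = Q x - (x - Bd (B x)) := by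
        rw [← this]; abel
      rw [h2]; abel
    -- B C = P
    have hBC : B ∘L C = P := by
      ext x
      simp only [hC, comp_apply, sub_apply, one_apply_eq_self, map_sub, hBQ, hFP]
      abel
    have hBCp : ∀ x, B (C x) = P x := fun x => by
      simpa using DFunLike.congr_fun hBC x
    refine ⟨?_, ?_, ?_, ?_⟩
    · ext x
      have : B (C (B x)) = B x := by rw [hBCp, hPB]
      simpa using this
    · ext x
      have : C (B (C x)) = C x := by
        rw [hBCp]
        simp only [hC, comp_apply, sub_apply, one_apply, hP2']
      simpa using this
    · rw [hCB]
      have hadj : adjoint (1 - Q) = 1 - adjoint Q := by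
        rw [← star_eq_adjoint, star_sub, star_one, star_eq_adjoint]
      rw [hadj, comp_sub, sub_comp, hQA]
      simp [one_def]
    · rw [hBC, hPA]
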